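/- For integers k1 ≥ 3, k2 ≥ 3 with k = k1 + k2, set a1 = √(k1/k) and a2 = √(k2/k). Then for all X1, X2 > 0, (a1^2 * X1^4 + a2^2 * X2^4) * X1^{2k1} * X2^{2k2} ≤ (a1^2 * X1 + a2^2 * X2)^{2k+4}. -/

import Mathlib

open Real Set

private lemma quartic_nonneg (k1 k2 : ℕ) (hk1 : 3 ≤ k1) (hk2 : 3 ≤ k2) (x : ℝ) (hx : 0 < x) :
    0 ≤ (k2:ℝ)*x^4 - 2*x^3 - 2*x^2 - 2*x + (k1:ℝ) := by
  have h1 : (3:ℝ) ≤ (k1:ℝ) := by exact_mod_cast hk1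
  have h2 : (3:ℝ) ≤ (k2:ℝ) := by exact_mod_cast hk2
  nlinarith [mul_nonneg (sq_nonneg (x-1)) (show (0:ℝ) ≤ 3*x^2+4*x+3 by positivity),
    mul_nonneg (show (0:ℝ) ≤ (k2:ℝ)-3 by linarith) (pow_nonneg hx.le 4)]

private lemma key (k1 k2 : ℕ) (hk1 : 3 ≤ k1) (hk2 : 3 ≤ k2) (a b : ℝ)
    (ha : a = (k1:ℝ)/((k1:ℝ)+(k2:ℝ))) (hb : b = (k2:ℝ)/((k1:ℝ)+(k2:ℝ)))
    (t : ℝ) (ht : 0 < t) :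
    (a + b * t^4) * t^(2*k2) ≤ (a + b*t)^(2*(k1+k2)+4) := by
  have hk1' : (3:ℝ) ≤ (k1:ℝ) := by exact_mod_cast hk1
  have hk2' : (3:ℝ) ≤ (k2:ℝ) := by exact_mod_cast hk2
  have hK : (0:ℝ) < (k1:ℝ)+(k2:ℝ) := by linarith
  have ha0 : 0 < a := by rw [ha]; exact div_pos (by linarith) hK
  have hb0 : 0 < b := by rw [hb]; exact div_pos (by linarith) hK
  have hab : a + b = 1 := by rw [ha, hb, ← add_div, div_self hK.ne']
  have hpos1 : ∀ x:ℝ, 0 < x → 0 < a + b*x := fun x hx => add_pos ha0 (mul_pos hb0 hx)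
  have hpos4 : ∀ x:ℝ, 0 < x → 0 < a + b*x^4 := fun x hx => add_pos ha0 (mul_pos hb0 (by positivity))
  set C : ℝ := 2*((k1:ℝ)+(k2:ℝ)) + 4 with hC
  set G : ℝ → ℝ :=
    fun x => C * Real.log (a + b*x) - Real.log (a + b*x^4) - (2*(k2:ℝ)) * Real.log x with hGdef
  set D : ℝ → ℝ :=
    fun x => 2*a*b*(x-1)*((k2:ℝ)*x^4 - 2*x^3 - 2*x^2 - 2*x + (k1:ℝ))
      / (x*(a+b*x)*(a+b*x^4)) with hDdef
  have hG : ∀ x:ℝ, 0 < x → HasDerivAt G (D x) x := by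
    intro x hx
    have h1 : HasDerivAt (fun y : ℝ => a + b*y) b x := by
      simpa using ((hasDerivAt_id x).const_mul b).const_add a
    have h1l : HasDerivAt (fun y : ℝ => Real.log (a + b*y)) (b/(a+b*x)) x :=
      h1.log (hpos1 x hx).ne'
    have h4 : HasDerivAt (fun y : ℝ => a + b*y^4) (b*(4*x^3)) x := by
      have h := ((hasDerivAt_pow 4 x).const_mul b).const_add a
      refine h.congr_deriv ?_
      norm_num
    have h4l : HasDerivAt (fun y : ℝ => Real.log (a + b*y^4)) (b*(4*x^3)/(a+b*x^4)) x :=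
      h4.log (hpos4 x hx).ne'
    have hxl : HasDerivAt (fun y : ℝ => (2*(k2:ℝ)) * Real.log y) (2*(k2:ℝ) * x⁻¹) x :=
      (Real.hasDerivAt_log hx.ne').const_mul _
    have hcomb := ((h1l.const_mul C).sub h4l).sub hxl
    refine hcomb.congr_deriv ?_
    have hd1 : a + b*x ≠ 0 := (hpos1 x hx).ne'
    have hd4 : a + b*x^4 ≠ 0 := (hpos4 x hx).ne'
    rw [hDdef]
    rw [ha, hb, hC] at *
    field_simp
    ring
  have h2ab : 0 < 2*a*b := by positivity
  -- G 1 = 0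
  have hG1 : G 1 = 0 := by
    rw [hGdef]
    simp [hab]
  -- 0 ≤ G t
  have hGt : 0 ≤ G t := by
    rcases le_total 1 t with h1t | ht1
    · have mono : MonotoneOn G (Ici 1) := by
        apply monotoneOn_of_deriv_nonneg (convex_Ici 1)
        · intro x hx
          exact (hG x (lt_of_lt_of_le zero_lt_one hx)).continuousAt.continuousWithinAt
        · intro x hx
          rw [interior_Ici] at hx
          exact (hG x (lt_trans zero_lt_one hx)).differentiableAt.differentiableWithinAt
        · intro x hx
          rw [interior_Ici] at hx
          have hx1 : 1 < x := hx
          have hx0 : 0 < x := lt_trans zero_lt_one hx1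
          rw [(hG x hx0).deriv, hDdef]
          apply div_nonneg
          · exact mul_nonneg (mul_nonneg h2ab.le (by linarith)) (quartic_nonneg k1 k2 hk1 hk2 x hx0)
          · exact (mul_pos (mul_pos hx0 (hpos1 x hx0)) (hpos4 x hx0)).le
      have := mono (self_mem_Ici) (h1t) h1t
      rw [hG1] at this; exact this
    · have anti : AntitoneOn G (Icc t 1) := by
        apply antitoneOn_of_deriv_nonpos (convex_Icc t 1)
        · intro x hx
          exact (hG x (lt_of_lt_of_le ht hx.1)).continuousAt.continuousWithinAt
        · intro x hx
          rw [interior_Icc] at hx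
          exact (hG x (lt_trans ht hx.1)).differentiableAt.differentiableWithinAt
        · intro x hx
          rw [interior_Icc] at hx
          have hx0 : 0 < x := lt_trans ht hx.1
          rw [(hG x hx0).deriv, hDdef]
          apply div_nonpos_of_nonpos_of_nonneg
          · exact mul_nonpos_of_nonpos_of_nonneg
              (mul_nonpos_of_nonneg_of_nonpos h2ab.le (by linarith [hx.2]))
              (quartic_nonneg k1 k2 hk1 hk2 x hx0)
          · exact (mul_pos (mul_pos hx0 (hpos1 x hx0)) (hpos4 x hx0)).le
      have := anti (left_mem_Icc.mpr ht1) (right_mem_Icc.mpr ht1) ht1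
      rw [hG1] at this; exact this
  -- conclude via log
  have hA : 0 < (a + b*t^4) * t^(2*k2) := mul_pos (hpos4 t ht) (pow_pos ht _)
  have hB : 0 < (a + b*t)^(2*(k1+k2)+4) := pow_pos (hpos1 t ht) _
  have hlog : Real.log ((a + b*t^4) * t^(2*k2)) ≤ Real.log ((a + b*t)^(2*(k1+k2)+4)) := by
    rw [Real.log_mul (hpos4 t ht).ne' (pow_pos ht _).ne', Real.log_pow, Real.log_pow]
    rw [hGdef, hC] at hGt
    simp only at hGt
    push_cast
    linarith
  have := Real.exp_le_exp.mpr hlog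
  rwa [Real.exp_log hA, Real.exp_log hB] at this

theorem stmt_5 (k1 k2 : ℕ) (hk1 : 3 ≤ k1) (hk2 : 3 ≤ k2) (X1 X2 : ℝ)
    (hX1 : 0 < X1) (hX2 : 0 < X2) :
    ((Real.sqrt ((k1 : ℝ)/(k1+k2)))^2 * X1^4 + (Real.sqrt ((k2 : ℝ)/(k1+k2)))^2 * X2^4)
        * X1^(2*k1) * X2^(2*k2)
      ≤ ((Real.sqrt ((k1 : ℝ)/(k1+k2)))^2 * X1
          + (Real.sqrt ((k2 : ℝ)/(k1+k2)))^2 * X2)^(2*(k1+k2)+4) := by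
  have hk1' : (3:ℝ) ≤ (k1:ℝ) := by exact_mod_cast hk1
  have hk2' : (3:ℝ) ≤ (k2:ℝ) := by exact_mod_cast hk2
  have hK : (0:ℝ) < (k1:ℝ)+(k2:ℝ) := by linarith
  have h1 : (0:ℝ) ≤ (k1:ℝ)/((k1:ℝ)+(k2:ℝ)) := by positivity
  have h2 : (0:ℝ) ≤ (k2:ℝ)/((k1:ℝ)+(k2:ℝ)) := by positivity
  rw [Real.sq_sqrt h1, Real.sq_sqrt h2]
  set a : ℝ := (k1:ℝ)/((k1:ℝ)+(k2:ℝ)) with ha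
  set b : ℝ := (k2:ℝ)/((k1:ℝ)+(k2:ℝ)) with hb
  have ht : 0 < X2/X1 := div_pos hX2 hX1
  have hkey := key k1 k2 hk1 hk2 a b ha hb (X2/X1) ht
  have hmul := mul_le_mul_of_nonneg_right hkey (pow_nonneg hX1.le (2*(k1+k2)+4))
  calc (a * X1^4 + b * X2^4) * X1^(2*k1) * X2^(2*k2)
      = ((a + b * (X2/X1)^4) * (X2/X1)^(2*k2)) * X1^(2*(k1+k2)+4) := by
        have hexp : 2*(k1+k2)+4 = 2*k2 + (4 + 2*k1) := by ring
        rw [div_pow, div_pow, hexp, pow_add, pow_add]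
        field_simp
    _ ≤ ((a + b * (X2/X1))^(2*(k1+k2)+4)) * X1^(2*(k1+k2)+4) := hmul
    _ = (a * X1 + b * X2)^(2*(k1+k2)+4) := by
        rw [← mul_pow]
        congr 1
        field_simp
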